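/- Let A be an n×n non-negative matrix with all entries at most 1. Any eigenvalue μ of A with nonzero imaginary part satisfies |μ| ≤ n/2. -/

import Mathlib

set_option maxHeartbeats 1000000


open Matrix Polynomial

theorem modulus_le_half_n (n : ℕ) (A : Matrix (Fin n) (Fin n) ℝ)
    (hA : ∀ i j, 0 ≤ A i j ∧ A i j ≤ 1)
    (μ : ℂ) (hμ : μ ∈ ((A.map Complex.ofReal).charpoly).roots) (him : μ.im ≠ 0) :
    ‖μ‖ ≤ n / 2 := by
  classical
  set M : Matrix (Fin n) (Fin n) ℂ := A.map Complex.ofReal with hMdef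
  -- μ is a root of the characteristic polynomial, hence det (μ•1 - M) = 0
  have hroot : M.charpoly.IsRoot μ := (Polynomial.mem_roots'.mp hμ).2
  have hdet : (Matrix.scalar (Fin n) μ - M).det = 0 := by
    have h0 : M.charpoly.eval μ = (Matrix.scalar (Fin n) μ - M).det := by
      rw [Matrix.charpoly, eval_det, Matrix.matPolyEquiv_charmatrix]
      simp
    rw [← h0]
    exact hroot
  obtain ⟨v, hv0, hv⟩ := Matrix.exists_mulVec_eq_zero_iff.mpr hdet
  -- coordinatewise eigen-equation
  have heig : ∀ i, μ * v i = ∑ j, (A i j : ℂ) * v j := by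
    intro i
    have h1 := congrFun hv i
    simp only [Matrix.sub_mulVec, Pi.sub_apply, Pi.zero_apply, sub_eq_zero] at h1
    have h2 : ((Matrix.scalar (Fin n) μ) *ᵥ v) i = μ * v i := by
      rw [Matrix.scalar_apply]
      simp [Matrix.mulVec_diagonal]
    have h3 : (M *ᵥ v) i = ∑ j, (A i j : ℂ) * v j := by
      simp [Matrix.mulVec, dotProduct, hMdef, Matrix.map_apply]
    rw [← h2, h1, h3]
  -- the support-type function
  set h : ℂ → ℝ := fun u => ∑ i, max ((u * v i).re) 0 with hhdef
  have hnn : ∀ u, 0 ≤ h u := fun u =>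
    Finset.sum_nonneg fun i _ => le_max_right _ _
  -- Claim A : for any w, Re (w * (μ * v i)) ≤ h w
  have claimA : ∀ (w : ℂ) (i : Fin n), (w * (μ * v i)).re ≤ h w := by
    intro w i
    rw [heig i, Finset.mul_sum, Complex.re_sum]
    apply Finset.sum_le_sum
    intro j _
    have hrw : w * ((A i j : ℂ) * v j) = ((A i j : ℝ) : ℂ) * (w * v j) := by ring
    rw [hrw, Complex.re_ofReal_mul]
    rcases le_or_gt 0 ((w * v j).re) with ht | ht
    · exact le_trans (mul_le_of_le_one_left ht (hA i j).2) (le_max_left _ _)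
    · exact le_trans (mul_nonpos_of_nonneg_of_nonpos (hA i j).1 ht.le) (le_max_right _ _)
  -- counting function
  set κ : ℂ → ℕ := fun u => (Finset.univ.filter (fun i => 0 < (u * v i).re)).card with hκdef
  have hsumκ : ∀ u : ℂ, h u = ∑ i ∈ Finset.univ.filter (fun i => 0 < (u * v i).re),
      (u * v i).re := by
    intro u
    have hstart : h u = ∑ i, max ((u * v i).re) 0 := rfl
    rw [hstart, ← Finset.sum_filter_add_sum_filter_not Finset.univ
      (fun i => 0 < (u * v i).re) (fun i => max ((u * v i).re) 0)]
    have h2 : ∑ i ∈ Finset.univ.filter (fun i => ¬ 0 < (u * v i).re),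
        max ((u * v i).re) 0 = 0 := by
      apply Finset.sum_eq_zero
      intro i hi
      exact max_eq_right (le_of_not_gt (Finset.mem_filter.mp hi).2)
    rw [h2, add_zero]
    apply Finset.sum_congr rfl
    intro i hi
    exact max_eq_left (Finset.mem_filter.mp hi).2.le
  -- Claim B
  have claimB : ∀ u : ℂ, (Complex.normSq μ) * h u ≤
      (κ u : ℝ) * h (u * (starRingEnd ℂ μ)) := by
    intro u
    have key : ∀ i : Fin n, Complex.normSq μ * (u * v i).re ≤
        h (u * (starRingEnd ℂ μ)) := by
      intro i
      have h1 := claimA (u * (starRingEnd ℂ μ)) i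
      have h2 : u * (starRingEnd ℂ μ) * (μ * v i)
          = ((Complex.normSq μ : ℝ) : ℂ) * (u * v i) := by
        rw [← Complex.mul_conj]
        ring
      rw [h2, Complex.re_ofReal_mul] at h1
      exact h1
    calc Complex.normSq μ * h u
        = ∑ i ∈ Finset.univ.filter (fun i => 0 < (u * v i).re),
            Complex.normSq μ * (u * v i).re := by
          rw [hsumκ u, Finset.mul_sum]
      _ ≤ ∑ i ∈ Finset.univ.filter (fun i => 0 < (u * v i).re),
            h (u * (starRingEnd ℂ μ)) :=
          Finset.sum_le_sum fun i _ => key i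
      _ = (κ u : ℝ) * h (u * (starRingEnd ℂ μ)) := by
          rw [Finset.sum_const, nsmul_eq_mul]
  -- κ u + κ (-u) ≤ n
  have hκsum : ∀ u : ℂ, (κ u : ℝ) + (κ (-u) : ℝ) ≤ (n : ℝ) := by
    intro u
    have hdisj : Disjoint (Finset.univ.filter (fun i => 0 < (u * v i).re))
        (Finset.univ.filter (fun i => 0 < ((-u) * v i).re)) := by
      rw [Finset.disjoint_left]
      intro i hi1 hi2
      have h1 := (Finset.mem_filter.mp hi1).2
      have h2 := (Finset.mem_filter.mp hi2).2
      rw [neg_mul, Complex.neg_re] at h2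
      linarith
    have hcard := Finset.card_union_of_disjoint hdisj
    have hle : ((Finset.univ.filter (fun i => 0 < (u * v i).re)) ∪
        (Finset.univ.filter (fun i => 0 < ((-u) * v i).re))).card ≤ n := by
      calc _ ≤ (Finset.univ : Finset (Fin n)).card := Finset.card_le_univ _
        _ = n := by simp
    rw [hcard] at hle
    have hnat : κ u + κ (-u) ≤ n := hle
    exact_mod_cast hnat
  -- homogeneity of h
  have hhom : ∀ (r : ℝ) (u : ℂ), 0 ≤ r → h ((r : ℂ) * u) = r * h u := by
    intro r u hr
    have hstart : h ((r : ℂ) * u) = ∑ i, max (((r : ℂ) * u * v i).re) 0 := rfl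
    have hstart2 : h u = ∑ i, max ((u * v i).re) 0 := rfl
    rw [hstart, hstart2, Finset.mul_sum]
    apply Finset.sum_congr rfl
    intro i _
    rw [mul_assoc, Complex.re_ofReal_mul, mul_max_of_nonneg _ _ hr, mul_zero]
  -- existence of a base point with h u > 0 and h (-u) > 0
  have hbase : ∃ u : ℂ, ‖u‖ = 1 ∧ 0 < h u ∧ 0 < h (-u) := by
    -- first: two ℝ-independent entries of v
    have hjk : ∃ j k : Fin n, (v j).re * (v k).im - (v j).im * (v k).re ≠ 0 := by
      by_contra hcon
      push_neg at hcon
      obtain ⟨i₀, hi₀⟩ := Function.ne_iff.mp hv0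
      simp only [Pi.zero_apply] at hi₀
      have hreal : ∀ j, ∃ r : ℝ, v j = (r : ℂ) * v i₀ := by
        intro j
        have hc := hcon j i₀
        have hz : (v j * (starRingEnd ℂ) (v i₀)).im = 0 := by
          simp only [Complex.mul_im, Complex.conj_re, Complex.conj_im]
          nlinarith [sub_eq_zero.mp hc]
        refine ⟨(v j * (starRingEnd ℂ) (v i₀)).re / Complex.normSq (v i₀), ?_⟩
        have hns : Complex.normSq (v i₀) ≠ 0 := by
          simpa [Complex.normSq_eq_zero] using hi₀
        have hzeq : v j * (starRingEnd ℂ) (v i₀)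
            = (((v j * (starRingEnd ℂ) (v i₀)).re : ℝ) : ℂ) := by
          apply Complex.ext
          · simp
          · simpa using hz
        have hmul2 : v j * ((Complex.normSq (v i₀) : ℝ) : ℂ)
            = (((v j * (starRingEnd ℂ) (v i₀)).re : ℝ) : ℂ) * v i₀ := by
          rw [← hzeq, ← Complex.mul_conj (v i₀)]
          ring
        have hnsC : ((Complex.normSq (v i₀) : ℝ) : ℂ) ≠ 0 :=
          Complex.ofReal_ne_zero.mpr hns
        rw [Complex.ofReal_div, div_mul_eq_mul_div, eq_div_iff hnsC]
        rw [← hmul2]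
      -- then μ is real
      choose rr hrr using hreal
      have hμv : μ * v i₀ = ((∑ j, A i₀ j * rr j : ℝ) : ℂ) * v i₀ := by
        rw [heig i₀]
        push_cast
        rw [Finset.sum_mul]
        apply Finset.sum_congr rfl
        intro j _
        rw [hrr j]
        ring
      have hμr : μ = ((∑ j, A i₀ j * rr j : ℝ) : ℂ) :=
        mul_right_cancel₀ hi₀ hμv
      rw [hμr] at him
      simp at him
    obtain ⟨j, k, hD⟩ := hjk
    set D := (v j).re * (v k).im - (v j).im * (v k).re with hDdef
    set p : ℝ := ((v j).im + (v k).im) / D with hpdef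
    set q : ℝ := ((v j).re + (v k).re) / D with hqdef
    set u₀ : ℂ := Complex.I * (q : ℂ) + (p : ℂ) with hu₀def
    have hu₀re : u₀.re = p := by simp [hu₀def]
    have hu₀im : u₀.im = q := by simp [hu₀def]
    have hu₀j : (u₀ * v j).re = 1 := by
      rw [Complex.mul_re, hu₀re, hu₀im, hpdef, hqdef]
      field_simp
      ring
    have hu₀k : (u₀ * v k).re = -1 := by
      rw [Complex.mul_re, hu₀re, hu₀im, hpdef, hqdef]
      field_simp
      ring
    have hu₀ne : u₀ ≠ 0 := by
      intro hcz
      rw [hcz] at hu₀j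
      simp at hu₀j
    have habsp : 0 < ‖u₀‖ := norm_pos_iff.mpr hu₀ne
    refine ⟨((‖u₀‖)⁻¹ : ℝ) * u₀, ?_, ?_, ?_⟩
    · rw [norm_mul]
      rw [Complex.norm_real, Real.norm_eq_abs, abs_of_nonneg (inv_nonneg.mpr habsp.le)]
      field_simp
    · rw [hhom _ _ (inv_nonneg.mpr habsp.le)]
      apply mul_pos (inv_pos.mpr habsp)
      have hone : (1 : ℝ) ≤ h u₀ := by
        have hm : max ((u₀ * v j).re) 0 = 1 := by rw [hu₀j]; simp
        calc (1:ℝ) = max ((u₀ * v j).re) 0 := hm.symm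
          _ ≤ h u₀ := by
              have hs0 : h u₀ = ∑ i, max ((u₀ * v i).re) 0 := rfl
              rw [hs0]
              exact Finset.single_le_sum (f := fun i => max ((u₀ * v i).re) 0)
                (fun i _ => le_max_right _ _) (Finset.mem_univ j)
      linarith
    · have hneg : -((((‖u₀‖)⁻¹ : ℝ) : ℂ) * u₀)
          = (((‖u₀‖)⁻¹ : ℝ) : ℂ) * (-u₀) := by ring
      rw [hneg, hhom _ _ (inv_nonneg.mpr habsp.le)]
      apply mul_pos (inv_pos.mpr habsp)
      have hone : (1 : ℝ) ≤ h (-u₀) := by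
        have hval : ((-u₀) * v k).re = 1 := by
          rw [neg_mul, Complex.neg_re, hu₀k]; ring
        have hm : max (((-u₀) * v k).re) 0 = 1 := by rw [hval]; simp
        calc (1:ℝ) = max (((-u₀) * v k).re) 0 := hm.symm
          _ ≤ h (-u₀) := by
              have hs0 : h (-u₀) = ∑ i, max (((-u₀) * v i).re) 0 := rfl
              rw [hs0]
              exact Finset.single_le_sum (f := fun i => max (((-u₀) * v i).re) 0)
                (fun i _ => le_max_right _ _) (Finset.mem_univ k)
      linarith
  obtain ⟨u₁, hu₁abs, hu₁pos, hu₁neg⟩ := hbase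
  -- maximize G on the unit sphere
  have hcont : Continuous h := by
    apply continuous_finset_sum
    intro i _
    exact (Complex.continuous_re.comp (continuous_id.mul continuous_const)).max
      continuous_const
  set G : ℂ → ℝ := fun u => h u * h (-u) with hGdef
  have hGcont : Continuous G := hcont.mul (hcont.comp continuous_neg)
  have hu₁S : u₁ ∈ Metric.sphere (0 : ℂ) 1 := by
    simp [Complex.dist_eq, hu₁abs]
  obtain ⟨uh, huhS, hmax⟩ := (isCompact_sphere (0 : ℂ) 1).exists_isMaxOn
    ⟨u₁, hu₁S⟩ hGcont.continuousOn
  have hGuh : 0 < G uh := lt_of_lt_of_le (mul_pos hu₁pos hu₁neg) (hmax hu₁S)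
  -- final computation
  set ρ : ℝ := ‖μ‖ with hρdef
  have hρpos : 0 < ρ := by
    rw [hρdef]
    apply norm_pos_iff.mpr
    intro hcz
    rw [hcz] at him
    simp at him
  have huhabs : ‖uh‖ = 1 := by
    simpa [Complex.dist_eq] using huhS
  set w : ℂ := ((ρ⁻¹ : ℝ) : ℂ) * (uh * (starRingEnd ℂ μ)) with hwdef
  have hwS : w ∈ Metric.sphere (0 : ℂ) 1 := by
    have : ‖w‖ = 1 := by
      rw [hwdef, norm_mul, norm_mul, Complex.norm_real, Real.norm_eq_abs, Complex.norm_conj, huhabs,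
        abs_of_nonneg (inv_nonneg.mpr hρpos.le)]
      rw [← hρdef]
      field_simp
    simpa [Complex.dist_eq] using this
  have hGw : G w ≤ G uh := hmax hwS
  have hw1 : h (uh * (starRingEnd ℂ μ)) = ρ * h w := by
    have hcomp : ((ρ : ℝ) : ℂ) * w = uh * (starRingEnd ℂ μ) := by
      rw [hwdef, ← mul_assoc, ← Complex.ofReal_mul, mul_inv_cancel₀ hρpos.ne']
      simp
    rw [← hcomp, hhom _ _ hρpos.le]
  have hw2 : h ((-uh) * (starRingEnd ℂ μ)) = ρ * h (-w) := by
    have hcomp : ((ρ : ℝ) : ℂ) * (-w) = (-uh) * (starRingEnd ℂ μ) := by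
      rw [hwdef]
      rw [show ((ρ : ℝ) : ℂ) * -(((ρ⁻¹ : ℝ) : ℂ) * (uh * (starRingEnd ℂ μ)))
        = -((((ρ : ℝ) * (ρ⁻¹ : ℝ) : ℝ) : ℂ) * (uh * (starRingEnd ℂ μ))) by push_cast; ring]
      rw [mul_inv_cancel₀ hρpos.ne']
      push_cast
      ring
    rw [← hcomp, hhom _ _ hρpos.le]
  have hB1 := claimB uh
  have hB2 := claimB (-uh)
  rw [hw1] at hB1
  rw [hw2] at hB2
  -- multiply the two inequalities
  have hRHS1 : 0 ≤ (κ uh : ℝ) * (ρ * h w) := by positivity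
  have hprod : (Complex.normSq μ * h uh) * (Complex.normSq μ * h (-uh)) ≤
      ((κ uh : ℝ) * (ρ * h w)) * ((κ (-uh) : ℝ) * (ρ * h (-w))) :=
    mul_le_mul hB1 hB2 (mul_nonneg (Complex.normSq_nonneg _) (hnn _)) hRHS1
  have hκprod : (κ uh : ℝ) * (κ (-uh) : ℝ) ≤ (n : ℝ)^2 / 4 := by
    have h1 := hκsum uh
    have h2 : (0:ℝ) ≤ (κ uh : ℝ) := Nat.cast_nonneg _
    have h3 : (0:ℝ) ≤ (κ (-uh) : ℝ) := Nat.cast_nonneg _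
    nlinarith [sq_nonneg ((κ uh : ℝ) - (κ (-uh) : ℝ))]
  have hnormSq : Complex.normSq μ = ρ^2 := by
    rw [hρdef, Complex.normSq_eq_norm_sq]
  have hGwnn : 0 ≤ G w := mul_nonneg (hnn _) (hnn _)
  have hfinal : ρ^4 * G uh ≤ ((n:ℝ)^2/4) * ρ^2 * G uh := by
    have hstep : (Complex.normSq μ * h uh) * (Complex.normSq μ * h (-uh))
        = ρ^4 * G uh := by
      rw [hnormSq, hGdef]; ring
    have hstep2 : ((κ uh : ℝ) * (ρ * h w)) * ((κ (-uh) : ℝ) * (ρ * h (-w)))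
        = ((κ uh : ℝ) * (κ (-uh) : ℝ)) * ρ^2 * G w := by
      rw [hGdef]; ring
    rw [hstep, hstep2] at hprod
    calc ρ^4 * G uh ≤ ((κ uh : ℝ) * (κ (-uh) : ℝ)) * ρ^2 * G w := hprod
      _ ≤ ((n:ℝ)^2/4) * ρ^2 * G w := by
          apply mul_le_mul_of_nonneg_right _ hGwnn
          exact mul_le_mul_of_nonneg_right hκprod (by positivity)
      _ ≤ ((n:ℝ)^2/4) * ρ^2 * G uh := by
          apply mul_le_mul_of_nonneg_left hGw (by positivity)
  have hρsq : ρ^2 ≤ (n:ℝ)^2/4 := by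
    have hx : 0 < ρ^2 * G uh := by positivity
    nlinarith [hfinal, hx]
  have hn0 : (0:ℝ) ≤ (n:ℝ) := Nat.cast_nonneg n
  nlinarith [hρsq, hρpos.le, hn0]
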